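/- Let $f_P(x)=8x^3+10x^2+3x+1$ and define $f_{P^{k+1}} = f_P\diamond f_{P^k}$ with $f_{P^1}=f_P$, where $(f\diamond g)(x)=\sum_{j\ge 0}\frac{f^{(j)}(x)}{j!}\frac{g^{(j)}(x)}{j!}x^j(x+1)^j$. Writing $f_{P^k}(x)=\sum_{\ell=0}^{3k}f_{k,\ell}x^\ell$, the coefficients satisfy $f_{k+1,0}=f_{k,0}$, $f_{k+1,1}=3f_{k,0}+4f_{k,1}$, and $f_{k+1,2}=10f_{k,0}+26f_{k,1}+17f_{k,2}$ for all $k\ge 1$. -/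

import Mathlib

set_option maxHeartbeats 2000000

open Polynomial

/-- The diamond product
`(f ⋄ g)(x) = ∑_{j ≥ 0} f^{(j)}(x)/j! ⋅ g^{(j)}(x)/j! ⋅ x^j (x+1)^j`. -/
noncomputable def diamond (f g : Polynomial ℝ) : Polynomial ℝ :=
  ∑ j ∈ Finset.range (f.natDegree + g.natDegree + 1),
    Polynomial.C (((j.factorial : ℝ))⁻¹ * ((j.factorial : ℝ))⁻¹) *
      (Polynomial.derivative^[j] f) * (Polynomial.derivative^[j] g) *
      (Polynomial.X * (Polynomial.X + 1)) ^ j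

lemma term_coeff_zero (p : Polynomial ℝ) {i j : ℕ} (h : i < j) :
    (p * (Polynomial.X * (Polynomial.X + 1)) ^ j).coeff i = 0 := by
  rw [mul_pow, show p * (X ^ j * (X+1)^j) = (p * (X+1)^j) * X ^ j by ring,
    Polynomial.coeff_mul_X_pow']
  simp [Nat.not_le.mpr h]

lemma diamond_coeff (fP g : Polynomial ℝ)
    (hfP : fP = 8 * Polynomial.X ^ 3 + 10 * Polynomial.X ^ 2 + 3 * Polynomial.X + 1)
    (i : ℕ) (hi : i < 3) :
    (diamond fP g).coeff i = ∑ j ∈ Finset.range 3,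
      (Polynomial.C (((j.factorial : ℝ))⁻¹ * ((j.factorial : ℝ))⁻¹) *
      (Polynomial.derivative^[j] fP) * (Polynomial.derivative^[j] g) *
      (Polynomial.X * (Polynomial.X + 1)) ^ j).coeff i := by
  have hd : fP.natDegree = 3 := by subst hfP; compute_degree!
  unfold diamond
  rw [hd, Polynomial.finset_sum_coeff]
  refine (Finset.sum_subset ?_ ?_).symm
  · intro x hx; simp only [Finset.mem_range] at *; omega
  · intro j _ hj3
    simp only [Finset.mem_range, not_lt] at hj3
    exact term_coeff_zero _ (by omega)

lemma diamond_c0 (fP g : Polynomial ℝ)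
    (hfP : fP = 8 * Polynomial.X ^ 3 + 10 * Polynomial.X ^ 2 + 3 * Polynomial.X + 1) :
    (diamond fP g).coeff 0 = g.coeff 0 := by
  have hD0 : (X*(X+1):Polynomial ℝ)^0 = 1 := by ring
  have hD1 : (X*(X+1):Polynomial ℝ)^1 = X^2+X := by ring
  have hD2 : (X*(X+1):Polynomial ℝ)^2 = X^4+2*X^3+X^2 := by ring
  rw [diamond_coeff fP g hfP 0 (by norm_num)]
  simp only [Finset.sum_range_succ, Finset.sum_range_one]
  simp [hfP, hD0, hD1, hD2, Function.iterate_succ_apply', coeff_mul,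
    Finset.Nat.sum_antidiagonal_eq_sum_range_succ_mk, Finset.sum_range_succ,
    coeff_derivative, Polynomial.coeff_one, Polynomial.coeff_X]

lemma diamond_c1 (fP g : Polynomial ℝ)
    (hfP : fP = 8 * Polynomial.X ^ 3 + 10 * Polynomial.X ^ 2 + 3 * Polynomial.X + 1) :
    (diamond fP g).coeff 1 = 3 * g.coeff 0 + 4 * g.coeff 1 := by
  have hD0 : (X*(X+1):Polynomial ℝ)^0 = 1 := by ring
  have hD1 : (X*(X+1):Polynomial ℝ)^1 = X^2+X := by ring
  have hD2 : (X*(X+1):Polynomial ℝ)^2 = X^4+2*X^3+X^2 := by ring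
  rw [diamond_coeff fP g hfP 1 (by norm_num)]
  simp only [Finset.sum_range_succ, Finset.sum_range_one]
  simp [hfP, hD0, hD1, hD2, Function.iterate_succ_apply', coeff_mul,
    Finset.Nat.sum_antidiagonal_eq_sum_range_succ_mk, Finset.sum_range_succ,
    coeff_derivative, Polynomial.coeff_one, Polynomial.coeff_X]
  ring

lemma diamond_c2 (fP g : Polynomial ℝ)
    (hfP : fP = 8 * Polynomial.X ^ 3 + 10 * Polynomial.X ^ 2 + 3 * Polynomial.X + 1) :
    (diamond fP g).coeff 2 = 10 * g.coeff 0 + 26 * g.coeff 1 + 17 * g.coeff 2 := by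
  have hD0 : (X*(X+1):Polynomial ℝ)^0 = 1 := by ring
  have hD1 : (X*(X+1):Polynomial ℝ)^1 = X^2+X := by ring
  have hD2 : (X*(X+1):Polynomial ℝ)^2 = X^4+2*X^3+X^2 := by ring
  rw [diamond_coeff fP g hfP 2 (by norm_num)]
  simp only [Finset.sum_range_succ, Finset.sum_range_one]
  simp [hfP, hD0, hD1, hD2, Function.iterate_succ_apply', coeff_mul,
    Finset.Nat.sum_antidiagonal_eq_sum_range_succ_mk, Finset.sum_range_succ,
    coeff_derivative, Polynomial.coeff_one, Polynomial.coeff_X]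
  ring

/-- Let `f_P = 8x^3+10x^2+3x+1` and `f_{P^{k+1}} = f_P ⋄ f_{P^k}` with
`f_{P^1} = f_P`.  The first three coefficients satisfy, for all `k ≥ 1`,
`f_{k+1,0}=f_{k,0}`, `f_{k+1,1}=3f_{k,0}+4f_{k,1}`,
`f_{k+1,2}=10f_{k,0}+26f_{k,1}+17f_{k,2}`. -/
theorem reeve_diamond_recursion (fP : Polynomial ℝ)
    (hfP : fP = 8 * Polynomial.X ^ 3 + 10 * Polynomial.X ^ 2 + 3 * Polynomial.X + 1)
    (F : ℕ → Polynomial ℝ) (hF1 : F 1 = fP)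
    (hFk : ∀ k, 1 ≤ k → F (k + 1) = diamond fP (F k)) :
    ∀ k, 1 ≤ k →
      (F (k + 1)).coeff 0 = (F k).coeff 0 ∧
      (F (k + 1)).coeff 1 = 3 * (F k).coeff 0 + 4 * (F k).coeff 1 ∧
      (F (k + 1)).coeff 2 =
        10 * (F k).coeff 0 + 26 * (F k).coeff 1 + 17 * (F k).coeff 2 := by
  intro k hk
  rw [hFk k hk]
  exact ⟨diamond_c0 fP (F k) hfP, diamond_c1 fP (F k) hfP, diamond_c2 fP (F k) hfP⟩
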